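/- Let d ≥ 1, let q₀ ∈ ℝ^d, let r > 0, let u : B(q₀,r) → ℝ be a function on the open ball B(q₀,r), and let C > 0. Define A^{C,u} to be the set of points q ∈ B(q₀,r) for which there exists a linear map φ_q : ℝ^d → ℝ such that |u(y) − u(q) − φ_q(y − q)| ≤ C‖y − q‖² for all y ∈ B(q₀,r). Then: (1) u is differentiable at every q ∈ A^{C,u} (within B(q₀,r)) with derivative d_qu = φ_q; and (2) the map q ↦ d_qu restricted to {q ∈ A^{C,u} : ‖q − q₀‖ ≤ r/3} is Lipschitz with Lipschitz constant 6C. -/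

import Mathlib

open Filter MeasureTheory Metric Set

def fathiSet (d : ℕ) (q₀ : EuclideanSpace ℝ (Fin d)) (r C : ℝ)
    (u : EuclideanSpace ℝ (Fin d) → ℝ) : Set (EuclideanSpace ℝ (Fin d)) :=
  {q | q ∈ Metric.ball q₀ r ∧ ∃ φ : EuclideanSpace ℝ (Fin d) →L[ℝ] ℝ,
    ∀ y ∈ Metric.ball q₀ r, |u y - u q - φ (y - q)| ≤ C * ‖y - q‖ ^ 2}

lemma fathi_phi_bound {d : ℕ} {q₀ : EuclideanSpace ℝ (Fin d)} {r C : ℝ} (hr : 0 < r) (hC : 0 < C)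
    {u : EuclideanSpace ℝ (Fin d) → ℝ} {q q' : EuclideanSpace ℝ (Fin d)}
    (hq3 : ‖q - q₀‖ ≤ r / 3) (hq'3 : ‖q' - q₀‖ ≤ r / 3)
    {φ φ' : EuclideanSpace ℝ (Fin d) →L[ℝ] ℝ}
    (hφ : ∀ y ∈ Metric.ball q₀ r, |u y - u q - φ (y - q)| ≤ C * ‖y - q‖ ^ 2)
    (hφ' : ∀ y ∈ Metric.ball q₀ r, |u y - u q' - φ' (y - q')| ≤ C * ‖y - q'‖ ^ 2)
    (hne : q ≠ q') :
    ‖φ - φ'‖ ≤ 6 * C * ‖q - q'‖ := by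
  set δ := ‖q - q'‖ with hδdef
  have hδ : 0 < δ := norm_pos_iff.mpr (sub_ne_zero.mpr hne)
  have hδle : δ ≤ 2 * r / 3 := by
    calc δ ≤ ‖q - q₀‖ + ‖q₀ - q'‖ := norm_sub_le_norm_sub_add_norm_sub q q₀ q'
    _ ≤ r / 3 + r / 3 := by
        have : ‖q₀ - q'‖ = ‖q' - q₀‖ := norm_sub_rev _ _
        linarith [this ▸ hq'3]
    _ = 2 * r / 3 := by ring
  have hq'ball : q' ∈ Metric.ball q₀ r := by
    rw [Metric.mem_ball, dist_eq_norm]; linarith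
  apply ContinuousLinearMap.opNorm_le_bound _ (by positivity)
  intro x
  rcases eq_or_ne x 0 with rfl | hx
  · simp
  have hxn : 0 < ‖x‖ := norm_pos_iff.mpr hx
  -- key inequality for θ ∈ (0,1)
  have key : ∀ θ ∈ Set.Ioo (0:ℝ) 1,
      ‖(φ - φ') x‖ ≤ C * ((1+θ)^2 + θ^2 + 1) * (δ * ‖x‖) / θ := by
    intro θ ⟨hθ0, hθ1⟩
    set t : ℝ := θ * δ / ‖x‖ with htdef
    have ht : 0 < t := by positivity
    set y : EuclideanSpace ℝ (Fin d) := q' + t • x with hydef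
    have hyq' : y - q' = t • x := by simp [hydef]
    have hyq'n : ‖y - q'‖ = θ * δ := by
      rw [hyq', norm_smul, Real.norm_eq_abs, abs_of_pos ht, htdef]
      field_simp
    have hyball : y ∈ Metric.ball q₀ r := by
      rw [Metric.mem_ball, dist_eq_norm]
      calc ‖y - q₀‖ ≤ ‖y - q'‖ + ‖q' - q₀‖ := norm_sub_le_norm_sub_add_norm_sub _ _ _
      _ = θ * δ + ‖q' - q₀‖ := by rw [hyq'n]
      _ < δ + r / 3 := by
          have : θ * δ < δ := by nlinarith
          linarith
      _ ≤ r := by linarith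
    have hyq : ‖y - q‖ ≤ (1 + θ) * δ := by
      calc ‖y - q‖ ≤ ‖y - q'‖ + ‖q' - q‖ := norm_sub_le_norm_sub_add_norm_sub _ _ _
      _ = θ * δ + δ := by rw [hyq'n, norm_sub_rev]
      _ = (1 + θ) * δ := by ring
    have hA := hφ y hyball
    have hB := hφ' y hyball
    have hD := hφ q' hq'ball
    have hA' : |u y - u q - φ (y - q)| ≤ C * ((1+θ) * δ)^2 := by
      refine hA.trans ?_
      gcongr
    have hB' : |u y - u q' - φ' (y - q')| ≤ C * (θ * δ)^2 := by
      refine hB.trans ?_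
      rw [hyq'n]
    have hD' : |u q' - u q - φ (q' - q)| ≤ C * δ^2 := by
      refine hD.trans ?_
      rw [norm_sub_rev]
    have hiden : (φ - φ') (y - q') =
        -(u y - u q - φ (y - q)) + (u y - u q' - φ' (y - q'))
          + (u q' - u q - φ (q' - q)) := by
      simp only [ContinuousLinearMap.sub_apply, map_sub]
      ring
    have habs : |(φ - φ') (y - q')| ≤ C * ((1+θ)^2 + θ^2 + 1) * δ^2 := by
      rw [hiden]
      calc |_ + _ + _| ≤ |(-(u y - u q - φ (y - q)) + (u y - u q' - φ' (y - q')))|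
            + |u q' - u q - φ (q' - q)| := abs_add_le _ _
      _ ≤ |(u y - u q - φ (y - q))| + |u y - u q' - φ' (y - q')|
            + |u q' - u q - φ (q' - q)| := by
          have := abs_add_le (-(u y - u q - φ (y - q))) (u y - u q' - φ' (y - q'))
          rw [abs_neg] at this
          linarith
      _ ≤ C * ((1+θ) * δ)^2 + C * (θ * δ)^2 + C * δ^2 := by linarith
      _ = C * ((1+θ)^2 + θ^2 + 1) * δ^2 := by ring
    have hmap : (φ - φ') (y - q') = t * (φ - φ') x := by
      rw [hyq', _root_.map_smul]; rfl
    rw [hmap] at habs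
    rw [abs_mul, abs_of_pos ht] at habs
    have hX : |(φ - φ') x| ≤ (C * ((1+θ)^2 + θ^2 + 1) * δ^2) / t := by
      rw [le_div_iff₀ ht, mul_comm]
      exact habs
    rw [Real.norm_eq_abs]
    refine hX.trans (le_of_eq ?_)
    rw [htdef]
    have hδ0 : δ ≠ 0 := hδ.ne'
    have hθ0' : θ ≠ 0 := hθ0.ne'
    have hx0 : ‖x‖ ≠ 0 := hxn.ne'
    field_simp
  -- pass to the limit θ → 1⁻
  have hlim : Tendsto (fun θ : ℝ => C * ((1+θ)^2 + θ^2 + 1) * (δ * ‖x‖) / θ)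
      (nhdsWithin 1 (Set.Iio 1)) (nhds (6 * C * δ * ‖x‖)) := by
    have hcont : ContinuousAt (fun θ : ℝ => C * ((1+θ)^2 + θ^2 + 1) * (δ * ‖x‖) / θ) 1 := by
      apply ContinuousAt.div
      · fun_prop
      · fun_prop
      · norm_num
    have hval : (6:ℝ) * C * δ * ‖x‖ = C * ((1+1)^2 + (1:ℝ)^2 + 1) * (δ * ‖x‖) / 1 := by ring
    rw [hval]
    exact hcont.tendsto.mono_left nhdsWithin_le_nhds
  have hev : ∀ᶠ θ in nhdsWithin (1:ℝ) (Set.Iio 1),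
      ‖(φ - φ') x‖ ≤ C * ((1+θ)^2 + θ^2 + 1) * (δ * ‖x‖) / θ := by
    filter_upwards [Ioo_mem_nhdsLT_of_mem (Set.mem_Ioc.mpr ⟨zero_lt_one, le_refl (1:ℝ)⟩)]
      with θ hθ using key θ hθ
  exact ge_of_tendsto hlim hev

theorem fathi_lipschitz_criterion (d : ℕ) (hd : 1 ≤ d)
    (q₀ : EuclideanSpace ℝ (Fin d)) (r : ℝ) (hr : 0 < r)
    (u : EuclideanSpace ℝ (Fin d) → ℝ) (C : ℝ) (hC : 0 < C) :
    (∀ q ∈ fathiSet d q₀ r C u, ∀ φ : EuclideanSpace ℝ (Fin d) →L[ℝ] ℝ,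
      (∀ y ∈ Metric.ball q₀ r, |u y - u q - φ (y - q)| ≤ C * ‖y - q‖ ^ 2) →
      HasFDerivWithinAt u φ (Metric.ball q₀ r) q) ∧
    LipschitzOnWith (Real.toNNReal (6 * C))
      (fun q => fderivWithin ℝ u (Metric.ball q₀ r) q)
      {q ∈ fathiSet d q₀ r C u | ‖q - q₀‖ ≤ r / 3} := by
  have part1 : ∀ q ∈ fathiSet d q₀ r C u, ∀ φ : EuclideanSpace ℝ (Fin d) →L[ℝ] ℝ,
      (∀ y ∈ Metric.ball q₀ r, |u y - u q - φ (y - q)| ≤ C * ‖y - q‖ ^ 2) →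
      HasFDerivWithinAt u φ (Metric.ball q₀ r) q := by
    intro q hq φ hφ
    apply hasFDerivWithinAt_iff_isLittleO.mpr
    rw [Asymptotics.isLittleO_iff]
    intro c hc
    have h1 : ∀ᶠ y in nhdsWithin q (Metric.ball q₀ r), y ∈ Metric.ball q₀ r :=
      eventually_mem_nhdsWithin
    have h2 : ∀ᶠ y in nhdsWithin q (Metric.ball q₀ r), ‖y - q‖ ≤ c / C := by
      have hball : ∀ᶠ y in nhds q, ‖y - q‖ ≤ c / C := by
        have hmem : Metric.closedBall q (c / C) ∈ nhds q :=
          Metric.closedBall_mem_nhds q (by positivity)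
        filter_upwards [hmem] with y hy
        rwa [Metric.mem_closedBall, dist_eq_norm] at hy
      exact hball.filter_mono nhdsWithin_le_nhds
    filter_upwards [h1, h2] with y hy1 hy2
    have := hφ y hy1
    rw [Real.norm_eq_abs]
    calc |u y - u q - φ (y - q)| ≤ C * ‖y - q‖ ^ 2 := this
    _ = C * ‖y - q‖ * ‖y - q‖ := by ring
    _ ≤ C * (c / C) * ‖y - q‖ := by gcongr
    _ = c * ‖y - q‖ := by field_simp
  refine ⟨part1, ?_⟩
  rw [lipschitzOnWith_iff_dist_le_mul]
  intro p hp p' hp'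
  rcases eq_or_ne p p' with rfl | hne
  · simp
  obtain ⟨⟨hpball, φ, hφ⟩, hp3⟩ := hp
  obtain ⟨⟨hp'ball, φ', hφ'⟩, hp'3⟩ := hp'
  have hder : HasFDerivWithinAt u φ (Metric.ball q₀ r) p :=
    part1 p ⟨hpball, φ, hφ⟩ φ hφ
  have hder' : HasFDerivWithinAt u φ' (Metric.ball q₀ r) p' :=
    part1 p' ⟨hp'ball, φ', hφ'⟩ φ' hφ'
  have hfd : fderivWithin ℝ u (Metric.ball q₀ r) p = φ :=
    hder.fderivWithin (Metric.isOpen_ball.uniqueDiffWithinAt hpball)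
  have hfd' : fderivWithin ℝ u (Metric.ball q₀ r) p' = φ' :=
    hder'.fderivWithin (Metric.isOpen_ball.uniqueDiffWithinAt hp'ball)
  simp only [hfd, hfd']
  rw [dist_eq_norm, dist_eq_norm]
  have := fathi_phi_bound hr hC hp3 hp'3 hφ hφ' hne
  calc ‖φ - φ'‖ ≤ 6 * C * ‖p - p'‖ := this
  _ = (Real.toNNReal (6 * C) : ℝ) * ‖p - p'‖ := by
      rw [Real.coe_toNNReal _ (by positivity)]
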